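/- Let ψ₁, ψ₂ be differentiable complex-valued functions of a real parameter λ with ρ = |ψ₁|² + |ψ₂|² > 0, and set Ψ(λ) = ρ^{-1/2}[[ψ₁, ψ₂],[-conj(ψ₂), conj(ψ₁)]]. Then the (1,1)-entry of (dΨ/dλ)·Ψ⁻¹ equals (1/2ρ)·(|ψ₁|²·(d/dλ)log(ψ₁/conj(ψ₁)) + |ψ₂|²·(d/dλ)log(ψ₂/conj(ψ₂))). -/

import Mathlib

open Matrix Complex

private lemma hasDerivAt_conjf {f : ℝ → ℂ} {f' : ℂ} {x : ℝ} (hf : HasDerivAt f f' x) :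
    HasDerivAt (fun t => (starRingEnd ℂ) (f t)) ((starRingEnd ℂ) f') x := by
  exact hf.star

private lemma hasDerivAt_ref {f : ℝ → ℂ} {f' : ℂ} {x : ℝ} (hf : HasDerivAt f f' x) :
    HasDerivAt (fun t => (f t).re) f'.re x := by
  simpa [Function.comp_def] using (Complex.reCLM.hasFDerivAt).comp_hasDerivAt x hf

set_option maxHeartbeats 1000000 in
/-- The (1,1)-entry of the logarithmic derivative of the normalized frame. -/
theorem frame_log_deriv_entry_11
    (ψ₁ ψ₂ : ℝ → ℂ)
    (h₁ : Differentiable ℝ ψ₁) (h₂ : Differentiable ℝ ψ₂)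
    (h₁0 : ∀ l, ψ₁ l ≠ 0) (h₂0 : ∀ l, ψ₂ l ≠ 0)
    (ρ : ℝ → ℝ) (hρ : ∀ l, ρ l = ‖ψ₁ l‖ ^ 2 + ‖ψ₂ l‖ ^ 2)
    (Ψ : ℝ → Matrix (Fin 2) (Fin 2) ℂ)
    (hΨ : ∀ l, Ψ l = ((Real.sqrt (ρ l))⁻¹ : ℂ) •
      !![ψ₁ l, ψ₂ l; -(starRingEnd ℂ) (ψ₂ l), (starRingEnd ℂ) (ψ₁ l)]) :
    ∀ l : ℝ,
      (Matrix.of (fun i j => deriv (fun x => Ψ x i j) l) * (Ψ l)⁻¹) 0 0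
        = (1 / (2 * (ρ l : ℂ))) *
          ((‖ψ₁ l‖ ^ 2 : ℂ) *
              (deriv (fun x => ψ₁ x / (starRingEnd ℂ) (ψ₁ x)) l /
                (ψ₁ l / (starRingEnd ℂ) (ψ₁ l)))
            + (‖ψ₂ l‖ ^ 2 : ℂ) *
              (deriv (fun x => ψ₂ x / (starRingEnd ℂ) (ψ₂ x)) l /
                (ψ₂ l / (starRingEnd ℂ) (ψ₂ l)))) := by
  intro l
  have ha0 : ψ₁ l ≠ 0 := h₁0 l
  have hb0 : ψ₂ l ≠ 0 := h₂0 l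
  have hca0 : (starRingEnd ℂ) (ψ₁ l) ≠ 0 := by simpa using ha0
  have hcb0 : (starRingEnd ℂ) (ψ₂ l) ≠ 0 := by simpa using hb0
  have hda : HasDerivAt ψ₁ (deriv ψ₁ l) l := (h₁ l).hasDerivAt
  have hdb : HasDerivAt ψ₂ (deriv ψ₂ l) l := (h₂ l).hasDerivAt
  have hρpos : 0 < ρ l := by
    have h1 : 0 < ‖ψ₁ l‖ ^ 2 := pow_pos (norm_pos_iff.mpr ha0) 2
    have h2 : (0:ℝ) ≤ ‖ψ₂ l‖ ^ 2 := sq_nonneg _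
    rw [hρ l]; linarith
  have hspos : 0 < Real.sqrt (ρ l) := Real.sqrt_pos.mpr hρpos
  have hsC : ((Real.sqrt (ρ l) : ℝ) : ℂ) ≠ 0 := by exact_mod_cast hspos.ne'
  have hρC0 : ((ρ l : ℝ) : ℂ) ≠ 0 := by exact_mod_cast hρpos.ne'
  -- derivative of ρ
  have hw1 : HasDerivAt (fun x => ψ₁ x * (starRingEnd ℂ) (ψ₁ x))
      (deriv ψ₁ l * (starRingEnd ℂ) (ψ₁ l) + ψ₁ l * (starRingEnd ℂ) (deriv ψ₁ l)) l :=
    hda.mul (hasDerivAt_conjf hda)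
  have hw2 : HasDerivAt (fun x => ψ₂ x * (starRingEnd ℂ) (ψ₂ x))
      (deriv ψ₂ l * (starRingEnd ℂ) (ψ₂ l) + ψ₂ l * (starRingEnd ℂ) (deriv ψ₂ l)) l :=
    hdb.mul (hasDerivAt_conjf hdb)
  have hρd : HasDerivAt ρ
      ((deriv ψ₁ l * (starRingEnd ℂ) (ψ₁ l) + ψ₁ l * (starRingEnd ℂ) (deriv ψ₁ l)).re
        + (deriv ψ₂ l * (starRingEnd ℂ) (ψ₂ l) + ψ₂ l * (starRingEnd ℂ) (deriv ψ₂ l)).re) l := by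
    have h : ρ = fun x => (ψ₁ x * (starRingEnd ℂ) (ψ₁ x)).re
        + (ψ₂ x * (starRingEnd ℂ) (ψ₂ x)).re := by
      funext x
      rw [hρ x]
      simp [Complex.mul_conj, Complex.sq_norm]
    rw [h]
    exact (hasDerivAt_ref hw1).add (hasDerivAt_ref hw2)
  -- the "real" value of the derivative of ρ, as a complex number
  have hr'C : (((deriv ψ₁ l * (starRingEnd ℂ) (ψ₁ l) + ψ₁ l * (starRingEnd ℂ) (deriv ψ₁ l)).re
        + (deriv ψ₂ l * (starRingEnd ℂ) (ψ₂ l) + ψ₂ l * (starRingEnd ℂ) (deriv ψ₂ l)).re : ℝ) : ℂ)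
      = deriv ψ₁ l * (starRingEnd ℂ) (ψ₁ l) + ψ₁ l * (starRingEnd ℂ) (deriv ψ₁ l)
        + (deriv ψ₂ l * (starRingEnd ℂ) (ψ₂ l) + ψ₂ l * (starRingEnd ℂ) (deriv ψ₂ l)) := by
    push_cast
    rw [Complex.conj_eq_iff_re.mp, Complex.conj_eq_iff_re.mp]
    · simp only [map_add, _root_.map_mul, Complex.conj_conj]; ring
    · simp only [map_add, _root_.map_mul, Complex.conj_conj]; ring
  -- derivative of the scalar prefactor
  have hre1 : (((deriv ψ₁ l * (starRingEnd ℂ) (ψ₁ l) + ψ₁ l * (starRingEnd ℂ) (deriv ψ₁ l)).re : ℝ) : ℂ)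
      = deriv ψ₁ l * (starRingEnd ℂ) (ψ₁ l) + ψ₁ l * (starRingEnd ℂ) (deriv ψ₁ l) := by
    rw [Complex.conj_eq_iff_re.mp]
    simp only [map_add, _root_.map_mul, Complex.conj_conj]; ring
  have hre2 : (((deriv ψ₂ l * (starRingEnd ℂ) (ψ₂ l) + ψ₂ l * (starRingEnd ℂ) (deriv ψ₂ l)).re : ℝ) : ℂ)
      = deriv ψ₂ l * (starRingEnd ℂ) (ψ₂ l) + ψ₂ l * (starRingEnd ℂ) (deriv ψ₂ l) := by
    rw [Complex.conj_eq_iff_re.mp]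
    simp only [map_add, _root_.map_mul, Complex.conj_conj]; ring
  have hgd : HasDerivAt (fun x => Real.sqrt (ρ x))
      (1 / (2 * Real.sqrt (ρ l)) *
        ((deriv ψ₁ l * (starRingEnd ℂ) (ψ₁ l) + ψ₁ l * (starRingEnd ℂ) (deriv ψ₁ l)).re
          + (deriv ψ₂ l * (starRingEnd ℂ) (ψ₂ l) + ψ₂ l * (starRingEnd ℂ) (deriv ψ₂ l)).re))
      l := (Real.hasDerivAt_sqrt hρpos.ne').comp l hρd
  have hcdC : HasDerivAt (fun y => (((Real.sqrt (ρ y))⁻¹ : ℝ) : ℂ)) _ l := (hgd.inv hspos.ne').ofReal_comp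
  -- entry functions
  have e00 : deriv (fun x => Ψ x 0 0) l
      = deriv (fun x => (((Real.sqrt (ρ x))⁻¹ : ℝ) : ℂ) * ψ₁ x) l := by
    congr 1; funext x; rw [hΨ x]; simp [Complex.ofReal_inv]
  have e01 : deriv (fun x => Ψ x 0 1) l
      = deriv (fun x => (((Real.sqrt (ρ x))⁻¹ : ℝ) : ℂ) * ψ₂ x) l := by
    congr 1; funext x; rw [hΨ x]; simp [Complex.ofReal_inv]
  -- ρ as complex
  have hρCval : ((ρ l : ℝ) : ℂ) = ψ₁ l * (starRingEnd ℂ) (ψ₁ l) + ψ₂ l * (starRingEnd ℂ) (ψ₂ l) := by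
    rw [hρ l, Complex.sq_norm, Complex.sq_norm]
    push_cast
    rw [Complex.mul_conj, Complex.mul_conj]
  have hsq2 : ((Real.sqrt (ρ l) : ℝ) : ℂ) ^ 2
      = ψ₁ l * (starRingEnd ℂ) (ψ₁ l) + ψ₂ l * (starRingEnd ℂ) (ψ₂ l) := by
    rw [← hρCval, ← Complex.ofReal_pow, Real.sq_sqrt hρpos.le]
  -- the inverse matrix
  have hinv : (Ψ l)⁻¹ = ((Real.sqrt (ρ l) : ℝ) : ℂ)⁻¹ •
      !![(starRingEnd ℂ) (ψ₁ l), -ψ₂ l; (starRingEnd ℂ) (ψ₂ l), ψ₁ l] := by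
    apply Matrix.inv_eq_right_inv
    rw [hΨ l]
    ext i j
    fin_cases i <;> fin_cases j <;>
      simp [Matrix.mul_apply, Fin.sum_univ_two, Matrix.one_apply] <;>
      field_simp
    all_goals first | linear_combination -hsq2 | linear_combination hsq2 | ring
  rw [Matrix.mul_apply, Fin.sum_univ_two, hinv]
  simp only [Matrix.of_apply, Matrix.smul_apply, Matrix.cons_val', Matrix.cons_val_zero,
    Matrix.cons_val_one, Matrix.head_cons, Matrix.head_fin_const, Matrix.empty_val',
    Matrix.cons_val_fin_one, smul_eq_mul]
  rw [e00, e01, (hcdC.fun_mul hda).deriv, (hcdC.fun_mul hdb).deriv,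
    (hda.fun_div (hasDerivAt_conjf hda) hca0).deriv, (hdb.fun_div (hasDerivAt_conjf hdb) hcb0).deriv]
  push_cast
  rw [hre1, hre2]
  have habs1 : ((‖ψ₁ l‖ : ℝ) : ℂ) ^ 2 = ψ₁ l * (starRingEnd ℂ) (ψ₁ l) := by
    rw [← Complex.ofReal_pow, Complex.sq_norm]; exact_mod_cast (Complex.mul_conj (ψ₁ l)).symm
  have habs2 : ((‖ψ₂ l‖ : ℝ) : ℂ) ^ 2 = ψ₂ l * (starRingEnd ℂ) (ψ₂ l) := by
    rw [← Complex.ofReal_pow, Complex.sq_norm]; exact_mod_cast (Complex.mul_conj (ψ₂ l)).symm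
  rw [habs1, habs2, hρCval, ← hsq2]
  field_simp
  linear_combination (deriv ψ₁ l * (starRingEnd ℂ) (ψ₁ l) + ψ₁ l * (starRingEnd ℂ) (deriv ψ₁ l)
      + deriv ψ₂ l * (starRingEnd ℂ) (ψ₂ l) + ψ₂ l * (starRingEnd ℂ) (deriv ψ₂ l)) * hsq2
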